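/- Let Φ be a CNF in variables x_1,…,x_n, let 0 ≤ k ≤ n, and let Φ' be the embedded CNF of (Φ,k). Then Φ' is satisfiable if and only if Φ has a satisfying assignment of weight exactly k. In particular, if (Φ,k) is a weighted parameterized contradiction (Φ has no satisfying assignment of weight exactly k), then Φ' is an ordinary contradiction (unsatisfiable). -/

import Mathlib

/-- A clause is a finite set of literals; a literal is a pair (variable, polarity). -/
abbrev Clause (V : Type) := Finset (V × Bool)

/-- An assignment satisfies a clause if it makes some literal of the clause true. -/
def satClause {V : Type} (α : V → Bool) (C : Clause V) : Prop :=
  ∃ l ∈ C, α l.1 = l.2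

/-- An assignment satisfies a CNF (a set of clauses) if it satisfies every clause. -/
def satCNF {V : Type} (α : V → Bool) (F : Set (Clause V)) : Prop :=
  ∀ C ∈ F, satClause α C

/-- A Resolution refutation of a set `F` of clauses: a finite sequence of clauses ending in
the empty clause, each clause being an axiom of `F`, a resolvent of two earlier clauses
(from `P ∨ x` and `Q ∨ ¬x` derive `P ∨ Q`), or a weakening of an earlier clause
(from `P` derive `P ∨ l`). Its size is the length of the sequence. -/
structure ResRefutation {V : Type} [DecidableEq V] (F : Set (Clause V)) where
  seq : List (Clause V)
  ne : seq ≠ []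
  lastEmpty : seq.getLast ne = (∅ : Clause V)
  valid : ∀ i (hi : i < seq.length),
    (seq[i]'hi ∈ F) ∨
    (∃ (j l : ℕ) (hj : j < i) (hl : l < i) (x : V) (P Q : Clause V),
      seq[j]'(hj.trans hi) = insert (x, true) P ∧
      seq[l]'(hl.trans hi) = insert (x, false) Q ∧
      seq[i]'hi = P ∪ Q) ∨
    (∃ (j : ℕ) (hj : j < i) (lit : V × Bool),
      seq[i]'hi = insert lit (seq[j]'(hj.trans hi)))

/-- The size of a Resolution refutation: the length of its sequence of clauses. -/
def ResRefutation.size {V : Type} [DecidableEq V] {F : Set (Clause V)}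
    (π : ResRefutation F) : ℕ :=
  π.seq.length

/-- Tree-Resolution derivations from the clause set `F`: each clause occurrence is used as a
premise of at most one inference. A tree-Resolution refutation of `F` is a `ResTree F ∅`. -/
inductive ResTree {V : Type} [DecidableEq V] (F : Set (Clause V)) : Clause V → Type where
  | ax (C : Clause V) (h : C ∈ F) : ResTree F C
  | res (x : V) (P Q : Clause V) (t₁ : ResTree F (insert (x, true) P))
      (t₂ : ResTree F (insert (x, false) Q)) : ResTree F (P ∪ Q)
  | weak (l : V × Bool) (C : Clause V) (t : ResTree F C) : ResTree F (insert l C)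

/-- The size of a tree-Resolution derivation: its number of clause occurrences. -/
def ResTree.size {V : Type} [DecidableEq V] {F : Set (Clause V)} :
    ∀ {C : Clause V}, ResTree F C → ℕ
  | _, .ax _ _ => 1
  | _, .res _ _ _ t₁ t₂ => t₁.size + t₂.size + 1
  | _, .weak _ _ t => t.size + 1

/-- The clauses `¬x_{i₁} ∨ ⋯ ∨ ¬x_{i_{k+1}}` over the variables in `Vars`. -/
def negClausesOn {V : Type} [DecidableEq V] (Vars : Finset V) (k : ℕ) : Set (Clause V) :=
  {C | ∃ S : Finset V, S ⊆ Vars ∧ S.card = k + 1 ∧ C = S.image (fun v => (v, false))}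

/-- The clauses `x_{i₁} ∨ ⋯ ∨ x_{i_{n-k+1}}` over the `n` variables in `Vars`. -/
def posClausesOn {V : Type} [DecidableEq V] (Vars : Finset V) (k : ℕ) : Set (Clause V) :=
  {C | ∃ S : Finset V, S ⊆ Vars ∧ S.card = Vars.card - k + 1 ∧ C = S.image (fun v => (v, true))}

/-- The weight of an assignment: the number of the `n` variables set to true. -/
def weight (n : ℕ) (α : ℕ → Bool) : ℕ :=
  ((Finset.range n).filter (fun i => α i = true)).card
/-- Variables of the embedded CNF: original variables `x_i`, pigeonhole variables
`r_{x_i,j}` and `s_{x_i,j}`. -/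
abbrev EV : Type := ℕ ⊕ (ℕ × ℕ ⊕ ℕ × ℕ)

def xvar (i : ℕ) : EV := Sum.inl i
def rvar (i j : ℕ) : EV := Sum.inr (Sum.inl (i, j))
def svar (i j : ℕ) : EV := Sum.inr (Sum.inr (i, j))

/-- The embedded CNF `Φ'` of `(Φ, k)` (for `Φ` a CNF in the variables `x_0, …, x_{n-1}`):
`Φ` together with the pigeonhole clauses
`¬x_i ∨ r_{x_i,1} ∨ ⋯ ∨ r_{x_i,k}`, `¬x_i ∨ ¬r_{x_i,j} ∨ ¬r_{x_l,j}` (`i ≠ l`, `j < k`),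
`x_i ∨ s_{x_i,1} ∨ ⋯ ∨ s_{x_i,n-k}`, and `x_i ∨ ¬s_{x_i,j} ∨ ¬s_{x_l,j}` (`i ≠ l`, `j < n-k`). -/
def EmbeddedCNF (Φ : Set (Clause ℕ)) (n k : ℕ) : Set (Clause EV) :=
  {C | ∃ D ∈ Φ, C = D.image (fun l => (xvar l.1, l.2))} ∪
  {C | ∃ i, i < n ∧
    C = insert (xvar i, false) ((Finset.range k).image (fun j => (rvar i j, true)))} ∪
  {C | ∃ i l j, i < n ∧ l < n ∧ i ≠ l ∧ j < k ∧
    C = {(xvar i, false), (rvar i j, false), (rvar l j, false)}} ∪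
  {C | ∃ i, i < n ∧
    C = insert (xvar i, true) ((Finset.range (n - k)).image (fun j => (svar i j, true)))} ∪
  {C | ∃ i l j, i < n ∧ l < n ∧ i ≠ l ∧ j < n - k ∧
    C = {(xvar i, true), (svar i j, false), (svar l j, false)}}

/-- An index function for a finset of size `k`: maps members injectively into `[0,k)`. -/
noncomputable def idxOf (T : Finset ℕ) {k : ℕ} (hTk : T.card = k) (i : ℕ) : ℕ :=
  if h : i ∈ T then ((T.orderIsoOfFin hTk).symm ⟨i, h⟩ : Fin k) else k

lemma idxOf_lt (T : Finset ℕ) {k : ℕ} (hTk : T.card = k) {i : ℕ} (hi : i ∈ T) :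
    idxOf T hTk i < k := by
  rw [idxOf, dif_pos hi]; exact ((T.orderIsoOfFin hTk).symm ⟨i, hi⟩).isLt

lemma idxOf_inj (T : Finset ℕ) {k : ℕ} (hTk : T.card = k) {i l : ℕ} (hi : i ∈ T)
    (hl : l ∈ T) (h : idxOf T hTk i = idxOf T hTk l) : i = l := by
  simp only [idxOf, dif_pos hi, dif_pos hl] at h
  have h2 : (T.orderIsoOfFin hTk).symm ⟨i, hi⟩ = (T.orderIsoOfFin hTk).symm ⟨l, hl⟩ :=
    Fin.ext h
  have := (T.orderIsoOfFin hTk).symm.injective h2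
  exact congrArg Subtype.val this


/-- for a CNF `Φ` in the variables `x_0, …, x_{n-1}` and `0 ≤ k ≤ n`,
the embedded CNF `Φ'` of `(Φ, k)` is satisfiable if and only if `Φ` has a satisfying
assignment of weight exactly `k`. In particular, if `(Φ, k)` is a weighted parameterized
contradiction then `Φ'` is an ordinary contradiction (unsatisfiable). -/

theorem embedded_cnf_satisfiable_iff (Φ : Set (Clause ℕ)) (n k : ℕ) (hkn : k ≤ n)
    (hvars : ∀ C ∈ Φ, ∀ l ∈ C, l.1 < n) :
    ((∃ β : EV → Bool, satCNF β (EmbeddedCNF Φ n k)) ↔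
      (∃ α : ℕ → Bool, satCNF α Φ ∧ weight n α = k)) ∧
    ((¬ ∃ α : ℕ → Bool, satCNF α Φ ∧ weight n α = k) →
      ∀ β : EV → Bool, ¬ satCNF β (EmbeddedCNF Φ n k)) := by
  classical
  have main : (∃ β : EV → Bool, satCNF β (EmbeddedCNF Φ n k)) ↔
      (∃ α : ℕ → Bool, satCNF α Φ ∧ weight n α = k) := by
    constructor
    · rintro ⟨β, hβ⟩
      refine ⟨fun i => β (xvar i), ?_, ?_⟩
      · intro D hD
        have hC : (D.image (fun l => (xvar l.1, l.2))) ∈ EmbeddedCNF Φ n k := by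
          simp only [EmbeddedCNF, Set.mem_union, Set.mem_setOf_eq]
          exact Or.inl (Or.inl (Or.inl (Or.inl ⟨D, hD, rfl⟩)))
        obtain ⟨l, hl, hval⟩ := hβ _ hC
        obtain ⟨m, hm, rfl⟩ := Finset.mem_image.mp hl
        exact ⟨m, hm, hval⟩
      · -- weight is exactly k
        set Tset := (Finset.range n).filter (fun i => β (xvar i) = true) with hTdef
        set Fset := (Finset.range n).filter (fun i => ¬ (β (xvar i) = true)) with hFdef
        have hT2 : ∀ i ∈ Tset, ∃ j, j < k ∧ β (rvar i j) = true := by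
          intro i hi
          rw [hTdef, Finset.mem_filter, Finset.mem_range] at hi
          have hC : (insert (xvar i, false)
              ((Finset.range k).image (fun j => (rvar i j, true)))) ∈ EmbeddedCNF Φ n k := by
            simp only [EmbeddedCNF, Set.mem_union, Set.mem_setOf_eq]
            exact Or.inl (Or.inl (Or.inl (Or.inr ⟨i, hi.1, rfl⟩)))
          obtain ⟨l, hl, hval⟩ := hβ _ hC
          rcases Finset.mem_insert.mp hl with rfl | hl
          · exact absurd hval (by simp [hi.2])
          · obtain ⟨j, hj, rfl⟩ := Finset.mem_image.mp hl
            exact ⟨j, Finset.mem_range.mp hj, hval⟩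
        have hF2 : ∀ i ∈ Fset, ∃ j, j < n - k ∧ β (svar i j) = true := by
          intro i hi
          rw [hFdef, Finset.mem_filter, Finset.mem_range] at hi
          have hC : (insert (xvar i, true)
              ((Finset.range (n - k)).image (fun j => (svar i j, true)))) ∈ EmbeddedCNF Φ n k := by
            simp only [EmbeddedCNF, Set.mem_union, Set.mem_setOf_eq]
            exact Or.inl (Or.inr ⟨i, hi.1, rfl⟩)
          obtain ⟨l, hl, hval⟩ := hβ _ hC
          rcases Finset.mem_insert.mp hl with rfl | hl
          · exact absurd hval hi.2
          · obtain ⟨j, hj, rfl⟩ := Finset.mem_image.mp hl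
            exact ⟨j, Finset.mem_range.mp hj, hval⟩
        obtain ⟨fT, hfT⟩ : ∃ f : ℕ → ℕ, ∀ i ∈ Tset, f i < k ∧ β (rvar i (f i)) = true := by
          refine ⟨fun i => if h : ∃ j, j < k ∧ β (rvar i j) = true then Nat.find h else 0, ?_⟩
          intro i hi
          have h := hT2 i hi
          simp only [dif_pos h]
          exact Nat.find_spec h
        obtain ⟨fF, hfF⟩ : ∃ f : ℕ → ℕ, ∀ i ∈ Fset, f i < n - k ∧ β (svar i (f i)) = true := by
          refine ⟨fun i => if h : ∃ j, j < n - k ∧ β (svar i j) = true then Nat.find h else 0, ?_⟩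
          intro i hi
          have h := hF2 i hi
          simp only [dif_pos h]
          exact Nat.find_spec h
        have hTcard : Tset.card ≤ k := by
          have := Finset.card_le_card_of_injOn fT
            (fun i hi => Finset.mem_range.mpr (hfT i hi).1) ?_
          · simpa using this
          · intro i hi l hl hfe
            by_contra hne
            have hi' := Finset.mem_filter.mp hi
            have hl' := Finset.mem_filter.mp hl
            have hC : ({(xvar i, false), (rvar i (fT i), false), (rvar l (fT i), false)} :
                Clause EV) ∈ EmbeddedCNF Φ n k := by
              simp only [EmbeddedCNF, Set.mem_union, Set.mem_setOf_eq]
              exact Or.inl (Or.inl (Or.inr ⟨i, l, fT i, Finset.mem_range.mp hi'.1,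
                Finset.mem_range.mp hl'.1, hne, (hfT i hi).1, rfl⟩))
            obtain ⟨lit, hlit, hval⟩ := hβ _ hC
            simp only [Finset.mem_insert, Finset.mem_singleton] at hlit
            rcases hlit with rfl | rfl | rfl
            · exact absurd hval (by simp [hi'.2])
            · exact absurd hval (by simp [(hfT i hi).2])
            · have h2 := (hfT l hl).2
              rw [← hfe] at h2
              exact absurd hval (by simp [h2])
        have hFcard : Fset.card ≤ n - k := by
          have := Finset.card_le_card_of_injOn fF
            (fun i hi => Finset.mem_range.mpr (hfF i hi).1) ?_
          · simpa using this
          · intro i hi l hl hfe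
            by_contra hne
            have hi' := Finset.mem_filter.mp hi
            have hl' := Finset.mem_filter.mp hl
            have hC : ({(xvar i, true), (svar i (fF i), false), (svar l (fF i), false)} :
                Clause EV) ∈ EmbeddedCNF Φ n k := by
              simp only [EmbeddedCNF, Set.mem_union, Set.mem_setOf_eq]
              exact Or.inr ⟨i, l, fF i, Finset.mem_range.mp hi'.1,
                Finset.mem_range.mp hl'.1, hne, (hfF i hi).1, rfl⟩
            obtain ⟨lit, hlit, hval⟩ := hβ _ hC
            simp only [Finset.mem_insert, Finset.mem_singleton] at hlit
            rcases hlit with rfl | rfl | rfl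
            · exact absurd hval hi'.2
            · exact absurd hval (by simp [(hfF i hi).2])
            · have h2 := (hfF l hl).2
              rw [← hfe] at h2
              exact absurd hval (by simp [h2])
        have hsum : Tset.card + Fset.card = n := by
          have := Finset.card_filter_add_card_filter_not
            (s := Finset.range n) (p := fun i => β (xvar i) = true)
          simpa [hTdef, hFdef] using this
        show Tset.card = k
        omega
    · rintro ⟨α, hsat, hw⟩
      set T := (Finset.range n).filter (fun i => α i = true) with hTdef
      set F := (Finset.range n).filter (fun i => ¬ (α i = true)) with hFdef
      have hTk : T.card = k := hw
      have hsum : T.card + F.card = n := by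
        have := Finset.card_filter_add_card_filter_not
          (s := Finset.range n) (p := fun i => α i = true)
        simpa [hTdef, hFdef] using this
      have hFk : F.card = n - k := by omega
      refine ⟨fun v => match v with
        | Sum.inl i => α i
        | Sum.inr (Sum.inl (i, j)) => decide (i ∈ T ∧ j = idxOf T hTk i)
        | Sum.inr (Sum.inr (i, j)) => decide (i ∈ F ∧ j = idxOf F hFk i), ?_⟩
      intro C hC
      simp only [EmbeddedCNF, Set.mem_union, Set.mem_setOf_eq] at hC
      obtain ((((⟨D, hD, rfl⟩ | ⟨i, hi, rfl⟩) | ⟨i, l, j, hi, hl, hil, hj, rfl⟩) |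
          ⟨i, hi, rfl⟩) | ⟨i, l, j, hi, hl, hil, hj, rfl⟩) := hC
      · obtain ⟨m, hm, hv⟩ := hsat D hD
        exact ⟨(xvar m.1, m.2), Finset.mem_image_of_mem _ hm, hv⟩
      · by_cases hα : α i = true
        · have hiT : i ∈ T := Finset.mem_filter.mpr ⟨Finset.mem_range.mpr hi, hα⟩
          refine ⟨(rvar i (idxOf T hTk i), true), Finset.mem_insert_of_mem
            (Finset.mem_image_of_mem _ (Finset.mem_range.mpr (idxOf_lt T hTk hiT))), ?_⟩
          show decide (i ∈ T ∧ idxOf T hTk i = idxOf T hTk i) = true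
          simp [hiT]
        · exact ⟨(xvar i, false), Finset.mem_insert_self _ _, by show α i = false; simpa using hα⟩
      · by_cases h1 : i ∈ T ∧ j = idxOf T hTk i
        · by_cases h2 : l ∈ T ∧ j = idxOf T hTk l
          · have : idxOf T hTk i = idxOf T hTk l := by rw [← h1.2, ← h2.2]
            exact absurd (idxOf_inj T hTk h1.1 h2.1 this) hil
          · refine ⟨(rvar l j, false), by simp, ?_⟩
            show decide (l ∈ T ∧ j = idxOf T hTk l) = false
            exact decide_eq_false h2
        · refine ⟨(rvar i j, false), by simp, ?_⟩
          show decide (i ∈ T ∧ j = idxOf T hTk i) = false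
          exact decide_eq_false h1
      · by_cases hα : α i = true
        · exact ⟨(xvar i, true), Finset.mem_insert_self _ _, hα⟩
        · have hiF : i ∈ F := Finset.mem_filter.mpr ⟨Finset.mem_range.mpr hi, hα⟩
          refine ⟨(svar i (idxOf F hFk i), true), Finset.mem_insert_of_mem
            (Finset.mem_image_of_mem _ (Finset.mem_range.mpr (idxOf_lt F hFk hiF))), ?_⟩
          show decide (i ∈ F ∧ idxOf F hFk i = idxOf F hFk i) = true
          simp [hiF]
      · by_cases h1 : i ∈ F ∧ j = idxOf F hFk i
        · by_cases h2 : l ∈ F ∧ j = idxOf F hFk l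
          · have : idxOf F hFk i = idxOf F hFk l := by rw [← h1.2, ← h2.2]
            exact absurd (idxOf_inj F hFk h1.1 h2.1 this) hil
          · refine ⟨(svar l j, false), by simp, ?_⟩
            show decide (l ∈ F ∧ j = idxOf F hFk l) = false
            exact decide_eq_false h2
        · refine ⟨(svar i j, false), by simp, ?_⟩
          show decide (i ∈ F ∧ j = idxOf F hFk i) = false
          exact decide_eq_false h1
  exact ⟨main, fun h β hβ => h (main.mp ⟨β, hβ⟩)⟩
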